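/- Any group homomorphism ρ from a group G to U_{n+1}(F_p) is trivial on G_{(n+1)}, the (n+1)-st term of the p-Zassenhaus filtration of G. -/

import Mathlib

/-- The subgroup generated by `p`-th powers of elements of `H`. -/
def Subgroup.pPow {G : Type*} [Group G] (H : Subgroup G) (p : ℕ) : Subgroup G :=
  Subgroup.closure {x : G | ∃ h ∈ H, x = h ^ p}

/-- The `p`-Zassenhaus filtration of a group `G`: `zassenhaus p hp G m` is `G_{(m)}`
(with the convention that the value at `0` is `⊤`). -/
def zassenhaus (p : ℕ) (hp : 2 ≤ p) (G : Type*) [Group G] : ℕ → Subgroup G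
  | 0 => ⊤
  | 1 => ⊤
  | (m + 2) =>
      (zassenhaus p hp G ((m + 1) / p + 1)).pPow p ⊔
        ⨆ i : Fin (m + 1),
          ⁅zassenhaus p hp G ((i : ℕ) + 1), zassenhaus p hp G (m + 1 - (i : ℕ))⁆
  decreasing_by
  · exact Nat.succ_lt_succ (Nat.div_lt_self (by omega) (by omega))
  · have := i.isLt; omega
  · have := i.isLt; omega


namespace ZassPaper

abbrev Mat (p n : ℕ) := Matrix (Fin (n + 1)) (Fin (n + 1)) (ZMod p)

/-- `memV p n d a` : the strictly upper triangular matrix `a` has all entries vanishing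
at superdiagonal distance `< d`, i.e. `a i j = 0` whenever `j - i ≤ d - 1`. -/
def memV (p n d : ℕ) (a : Mat p n) : Prop :=
  ∀ i j : Fin (n + 1), (j : ℕ) < (i : ℕ) + d → a i j = 0

lemma memV_mono (p n : ℕ) {d e : ℕ} (h : e ≤ d) {a : Mat p n} (ha : memV p n d a) :
    memV p n e a := fun i j hij => ha i j (by omega)

lemma memV_zero (p n d : ℕ) : memV p n d 0 := fun _ _ _ => rfl

lemma memV_add (p n : ℕ) {d : ℕ} {a b : Mat p n} (ha : memV p n d a) (hb : memV p n d b) :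
    memV p n d (a + b) := by
  intro i j h
  simp [Matrix.add_apply, ha i j h, hb i j h]

lemma memV_mul (p n : ℕ) {d e : ℕ} {a b : Mat p n} (ha : memV p n d a) (hb : memV p n e b) :
    memV p n (d + e) (a * b) := by
  intro i j h
  rw [Matrix.mul_apply]
  apply Finset.sum_eq_zero
  intro k _
  by_cases hk : (k : ℕ) < (i : ℕ) + d
  · rw [ha i k hk, zero_mul]
  · rw [hb k j (by omega), mul_zero]

variable (p n : ℕ) [Fact p.Prime]

def UTset : Set (GL (Fin (n + 1)) (ZMod p)) :=
  {A | ∃ a : Mat p n, memV p n 1 a ∧ (A : Mat p n) = 1 + a}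

lemma UTset_one : (1 : GL (Fin (n + 1)) (ZMod p)) ∈ UTset p n :=
  ⟨0, memV_zero p n 1, by simp⟩

lemma UTset_mul {A B : GL (Fin (n + 1)) (ZMod p)} (hA : A ∈ UTset p n) (hB : B ∈ UTset p n) :
    A * B ∈ UTset p n := by
  obtain ⟨a, ha, hA⟩ := hA
  obtain ⟨b, hb, hB⟩ := hB
  refine ⟨a + b + a * b, ?_, ?_⟩
  · exact memV_add p n (memV_add p n ha hb)
      (memV_mono p n (by omega) (memV_mul p n ha hb))
  · show ((A * B : GL (Fin (n + 1)) (ZMod p)) : Mat p n) = _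
    rw [Units.val_mul, hA, hB]
    noncomm_ring

lemma UTset_pow {A : GL (Fin (n + 1)) (ZMod p)} (hA : A ∈ UTset p n) (k : ℕ) :
    A ^ k ∈ UTset p n := by
  induction k with
  | zero => simpa using UTset_one p n
  | succ k ih => rw [pow_succ]; exact UTset_mul p n ih hA

lemma UTset_inv {A : GL (Fin (n + 1)) (ZMod p)} (hA : A ∈ UTset p n) :
    A⁻¹ ∈ UTset p n := by
  have h1 : A ^ Fintype.card (GL (Fin (n + 1)) (ZMod p)) = 1 := pow_card_eq_one
  have hc : 0 < Fintype.card (GL (Fin (n + 1)) (ZMod p)) := Fintype.card_pos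
  have : A⁻¹ = A ^ (Fintype.card (GL (Fin (n + 1)) (ZMod p)) - 1) := by
    have : A * A ^ (Fintype.card (GL (Fin (n + 1)) (ZMod p)) - 1) = 1 := by
      rw [← pow_succ', Nat.sub_add_cancel hc]
      exact h1
    exact ((inv_eq_of_mul_eq_one_right this).symm).symm
  rw [this]
  exact UTset_pow p n hA _

/-- The group of upper triangular unipotent `(n+1)×(n+1)` matrices over `F_p`,
as a subgroup of `GL (Fin (n+1)) (ZMod p)`. -/
def UT : Subgroup (GL (Fin (n + 1)) (ZMod p)) where
  carrier := UTset p n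
  one_mem' := UTset_one p n
  mul_mem' := UTset_mul p n
  inv_mem' := UTset_inv p n



lemma memV_neg (p n : ℕ) {d : ℕ} {a : Mat p n} (ha : memV p n d a) : memV p n d (-a) := by
  intro i j h
  simp [Matrix.neg_apply, ha i j h]

lemma memV_sub (p n : ℕ) {d : ℕ} {a b : Mat p n} (ha : memV p n d a) (hb : memV p n d b) :
    memV p n d (a - b) := by
  rw [sub_eq_add_neg]; exact memV_add p n ha (memV_neg p n hb)

lemma memV_one (p n : ℕ) : memV p n 0 (1 : Mat p n) := by
  intro i j h
  exact Matrix.one_apply_ne (by intro he; subst he; omega)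

lemma memV_pow (p n : ℕ) {d : ℕ} {a : Mat p n} (ha : memV p n d a) (k : ℕ) :
    memV p n (k * d) (a ^ k) := by
  induction k with
  | zero => simpa using memV_one p n
  | succ k ih =>
      rw [pow_succ, Nat.succ_mul]
      exact memV_mul p n ih ha

lemma memV_mul_one_add (p n : ℕ) {d e : ℕ} {x y : Mat p n} (hx : memV p n d x)
    (hy : memV p n e y) : memV p n d (x * (1 + y)) := by
  have : x * (1 + y) = x + x * y := by noncomm_ring
  rw [this]
  exact memV_add p n hx (memV_mono p n (Nat.le_add_right d e) (memV_mul p n hx hy))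

def Vgrp (m : ℕ) : Subgroup (GL (Fin (n + 1)) (ZMod p)) where
  carrier := {A | ∃ a : Mat p n, memV p n m a ∧ (A : Mat p n) = 1 + a}
  one_mem' := ⟨0, memV_zero p n m, by simp⟩
  mul_mem' := by
    rintro A B ⟨a, ha, hA⟩ ⟨b, hb, hB⟩
    refine ⟨a + b + a * b, ?_, ?_⟩
    · exact memV_add p n (memV_add p n ha hb)
        (memV_mono p n (Nat.le_add_right m m) (memV_mul p n ha hb))
    · show ((A * B : GL (Fin (n + 1)) (ZMod p)) : Mat p n) = _
      rw [Units.val_mul, hA, hB]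
      noncomm_ring
  inv_mem' := by
    rintro A hA
    have hpow : ∀ k : ℕ, A ^ k ∈
        {A : GL (Fin (n + 1)) (ZMod p) | ∃ a : Mat p n, memV p n m a ∧ (A : Mat p n) = 1 + a} := by
      intro k
      induction k with
      | zero => exact ⟨0, memV_zero p n m, by simp⟩
      | succ k ih =>
          obtain ⟨a, ha, hA'⟩ := ih
          obtain ⟨b, hb, hB'⟩ := hA
          refine ⟨a + b + a * b, memV_add p n (memV_add p n ha hb)
            (memV_mono p n (Nat.le_add_right m m) (memV_mul p n ha hb)), ?_⟩
          show ((A ^ k * A : GL (Fin (n + 1)) (ZMod p)) : Mat p n) = _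
          rw [Units.val_mul, hA', hB']
          noncomm_ring
    have h1 : A ^ Fintype.card (GL (Fin (n + 1)) (ZMod p)) = 1 := pow_card_eq_one
    have hc : 0 < Fintype.card (GL (Fin (n + 1)) (ZMod p)) := Fintype.card_pos
    have hAinv : A⁻¹ = A ^ (Fintype.card (GL (Fin (n + 1)) (ZMod p)) - 1) := by
      have : A * A ^ (Fintype.card (GL (Fin (n + 1)) (ZMod p)) - 1) = 1 := by
        rw [← pow_succ', Nat.sub_add_cancel hc]
        exact h1
      exact ((inv_eq_of_mul_eq_one_right this).symm).symm
    rw [hAinv]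
    exact hpow _

lemma Vgrp_mono {d e : ℕ} (h : e ≤ d) : Vgrp p n d ≤ Vgrp p n e := by
  rintro A ⟨a, ha, hA⟩
  exact ⟨a, memV_mono p n h ha, hA⟩

lemma Vgrp_pow_p {d : ℕ} {A : GL (Fin (n + 1)) (ZMod p)} (hA : A ∈ Vgrp p n d) :
    A ^ p ∈ Vgrp p n (p * d) := by
  obtain ⟨a, ha, hAa⟩ := hA
  refine ⟨a ^ p, memV_pow p n ha p, ?_⟩
  show ((A ^ p : GL (Fin (n + 1)) (ZMod p)) : Mat p n) = 1 + a ^ p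
  rw [Units.val_pow_eq_pow_val, hAa, add_pow_char_of_commute p (Commute.one_left a), one_pow]

lemma Vgrp_commutator {i j : ℕ} {A B : GL (Fin (n + 1)) (ZMod p)}
    (hA : A ∈ Vgrp p n i) (hB : B ∈ Vgrp p n j) : @Bracket.bracket _ _ commutatorElement A B ∈ Vgrp p n (i + j) := by
  obtain ⟨a, ha, hAa⟩ := hA
  obtain ⟨b, hb, hBb⟩ := hB
  obtain ⟨a', ha', hAa'⟩ := (Vgrp p n i).inv_mem ⟨a, ha, hAa⟩
  obtain ⟨b', hb', hBb'⟩ := (Vgrp p n j).inv_mem ⟨b, hb, hBb⟩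
  have hab : memV p n (i + j) (a * b - b * a) :=
    memV_sub p n (memV_mul p n ha hb) (by rw [Nat.add_comm i j]; exact memV_mul p n hb ha)
  have hc : ((1 : Mat p n) + a) * (1 + b) - (1 + b) * (1 + a) = a * b - b * a := by
    noncomm_ring
  refine ⟨(((1 : Mat p n) + a) * (1 + b) - (1 + b) * (1 + a)) * (1 + a') * (1 + b'), ?_, ?_⟩
  · rw [hc]
    exact memV_mul_one_add p n (memV_mul_one_add p n hab ha') hb' 
  have key : ∀ x y x' y' : Mat p n, x * x' = 1 → y * y' = 1 →
      x * y * x' * y' = 1 + (x * y - y * x) * x' * y' := by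
    intro x y x' y' h1 h2
    have h3 : (x * y - y * x) * x' * y' = x * y * x' * y' - y * (x * x') * y' := by
      noncomm_ring
    rw [h3, h1, mul_one, h2]
    abel
  have h1 : ((1 : Mat p n) + a) * ((1 : Mat p n) + a') = 1 := by
    rw [← hAa, ← hAa', ← Units.val_mul]
    simp
  have h2 : ((1 : Mat p n) + b) * ((1 : Mat p n) + b') = 1 := by
    rw [← hBb, ← hBb', ← Units.val_mul]
    simp
  show ((@Bracket.bracket _ _ commutatorElement A B : GL (Fin (n + 1)) (ZMod p)) : Mat p n) = _
  rw [commutatorElement_def, Units.val_mul, Units.val_mul, Units.val_mul,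
    hAa, hBb, hAa', hBb']
  exact key _ _ _ _ h1 h2

lemma zass_le (G : Type*) [Group G] (ρ : G →* UT p n) (m : ℕ) :
    zassenhaus p (Fact.out : p.Prime).two_le G m ≤
      (Vgrp p n m).comap ((UT p n).subtype.comp ρ) := by
  have hp2 : 2 ≤ p := (Fact.out : p.Prime).two_le
  have hUT : ∀ g : G, ((UT p n).subtype.comp ρ) g ∈ Vgrp p n 1 := by
    intro g
    obtain ⟨a, ha, hA⟩ := (ρ g).2
    exact ⟨a, ha, hA⟩
  induction m using Nat.strong_induction_on with
  | _ m IH =>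
    match m with
    | 0 =>
        intro g _
        exact Subgroup.mem_comap.2 (Vgrp_mono p n (Nat.zero_le 1) (hUT g))
    | 1 =>
        intro g _
        exact Subgroup.mem_comap.2 (hUT g)
    | (m + 2) =>
        rw [zassenhaus]
        apply sup_le
        · rw [Subgroup.pPow]
          rw [Subgroup.closure_le]
          rintro x ⟨h, hh, rfl⟩
          have hd := IH ((m + 1) / p + 1)
            (Nat.succ_lt_succ (Nat.div_lt_self (by omega) (by omega))) hh
          have hmem : ((UT p n).subtype.comp ρ) (h ^ p) ∈ Vgrp p n (p * ((m + 1) / p + 1)) := by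
            rw [map_pow]
            exact Vgrp_pow_p p n (Subgroup.mem_comap.1 hd)
          have hle : m + 2 ≤ p * ((m + 1) / p + 1) := by
            have hdm := Nat.div_add_mod (m + 1) p
            have hlt : (m + 1) % p < p := Nat.mod_lt _ (by omega)
            have : p * ((m + 1) / p + 1) = p * ((m + 1) / p) + p := by ring
            omega
          exact Subgroup.mem_comap.2 (Vgrp_mono p n hle hmem)
        · apply iSup_le
          intro i
          rw [Subgroup.commutator_le]
          intro g1 hg1 g2 hg2
          have h1 := Subgroup.mem_comap.1 (IH ((i : ℕ) + 1) (by have := i.isLt; omega) hg1)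
          have h2 := Subgroup.mem_comap.1 (IH (m + 1 - (i : ℕ)) (by omega) hg2)
          have := Vgrp_commutator p n h1 h2
          have heq : (i : ℕ) + 1 + (m + 1 - (i : ℕ)) = m + 2 := by have := i.isLt; omega
          rw [heq] at this
          rw [Subgroup.mem_comap, map_commutatorElement]
          exact this

/-- Any homomorphism from a group `G` to `U_{n+1}(F_p)` is trivial on `G_{(n+1)}`. -/
theorem stmt7 (p n : ℕ) [Fact p.Prime] (hn : 1 ≤ n) (G : Type*) [Group G]
    (ρ : G →* UT p n) :
    ∀ g ∈ zassenhaus p (Fact.out : p.Prime).two_le G (n + 1), ρ g = 1 := by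
  intro g hg
  have hmem := zass_le p n G ρ (n + 1) hg
  obtain ⟨a, ha, hA⟩ := Subgroup.mem_comap.1 hmem
  have ha0 : a = 0 := by
    ext i j
    exact ha i j (by have := j.isLt; omega)
  rw [ha0, add_zero] at hA
  have hval : (((UT p n).subtype.comp ρ) g : GL (Fin (n + 1)) (ZMod p)) = 1 := Units.ext hA
  exact Subtype.ext hval

end ZassPaper
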